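/- If the particle clusters of the rotor-router model satisfy V_{n,RR,h-1} ⊆ V_{n,DR,h} ⊆ V_{n,RR,h} (as finite subsets of Z^d), V_{n,RR,h} rescaled by (n/|h|)^{-1/d} converges to the unit ball B in symmetric-difference measure for every fixed h ≤ -1, then limsup_{n→∞} λ((n/|h|)^{-1/d} V_{n,DR,h} △ B) ≤ 1 − |h|/(|h|+1), and hence lim_{h→−∞} limsup_{n→∞} λ((n/|h|)^{-1/d} V_{n,DR,h} △ B) = 0. -/

import Mathlib

open MeasureTheory Pointwise Filter

theorem dr_limit_shape_sphere (d : ℕ) (hd : 1 ≤ d)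
    (ρ : ℝ) (hρ : 0 < ρ) (B : Set (EuclideanSpace ℝ (Fin d)))
    (hB : B = Metric.ball 0 ρ) (hvol : volume B = 1)
    (VRR VDR : ℤ → ℕ → Set (EuclideanSpace ℝ (Fin d)))
    (hsub : ∀ h : ℤ, h ≤ -1 → ∀ n : ℕ, VRR (h - 1) n ⊆ VDR h n ∧ VDR h n ⊆ VRR h n)
    (hconv : ∀ h : ℤ, h ≤ -1 →
      Tendsto (fun n : ℕ =>
          volume (symmDiff ((((n : ℝ) / |(h : ℝ)|) ^ (-(1 : ℝ) / d)) • VRR h n) B))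
        atTop (nhds 0)) :
    (∀ h : ℤ, h ≤ -1 →
      limsup (fun n : ℕ =>
          volume (symmDiff ((((n : ℝ) / |(h : ℝ)|) ^ (-(1 : ℝ) / d)) • VDR h n) B)) atTop
        ≤ ENNReal.ofReal (1 - |(h : ℝ)| / (|(h : ℝ)| + 1))) ∧
    Tendsto (fun h : ℤ =>
        limsup (fun n : ℕ =>
          volume (symmDiff ((((n : ℝ) / |(h : ℝ)|) ^ (-(1 : ℝ) / d)) • VDR h n) B)) atTop)
      atBot (nhds 0) := by
  have hd0 : (d : ℝ) ≠ 0 := Nat.cast_ne_zero.2 (by omega)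
  have key : ∀ h : ℤ, h ≤ -1 →
      limsup (fun n : ℕ =>
          volume (symmDiff ((((n : ℝ) / |(h : ℝ)|) ^ (-(1 : ℝ) / d)) • VDR h n) B)) atTop
        ≤ ENNReal.ofReal (1 - |(h : ℝ)| / (|(h : ℝ)| + 1)) := by
    intro h hh
    have hhr : (h : ℝ) ≤ -1 := by exact_mod_cast hh
    set a : ℝ := |(h : ℝ)| with ha_def
    have ha1 : (1 : ℝ) ≤ a := by
      rw [ha_def, abs_of_nonpos (by linarith)]; linarith
    have ha0 : (0 : ℝ) < a := by linarith
    have hb0 : (0 : ℝ) < a + 1 := by linarith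
    have habs : |((h : ℝ) - 1)| = a + 1 := by
      rw [abs_of_nonpos (by linarith), ha_def, abs_of_nonpos (by linarith)]; ring
    set c : ℝ := (a / (a + 1)) ^ ((1 : ℝ) / d) with hc_def
    have hab0 : (0 : ℝ) < a / (a + 1) := div_pos ha0 hb0
    have hab1 : a / (a + 1) < 1 := (div_lt_one hb0).2 (by linarith)
    have hc0 : 0 < c := Real.rpow_pos_of_pos hab0 _
    have hc1 : c ≤ 1 :=
      le_of_lt (Real.rpow_lt_one hab0.le hab1 (by positivity))
    have hcd : c ^ d = a / (a + 1) := by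
      rw [hc_def, ← Real.rpow_natCast ((a / (a+1)) ^ ((1:ℝ)/d)) d,
        ← Real.rpow_mul hab0.le, one_div_mul_cancel hd0, Real.rpow_one]
    -- relation between scalings
    have hscal : ∀ n : ℕ, ((n : ℝ) / a) ^ (-(1 : ℝ) / d)
        = c * ((n : ℝ) / |((h : ℝ) - 1)|) ^ (-(1 : ℝ) / d) := by
      intro n
      rw [habs]
      have h1 : (n : ℝ) / a = ((n : ℝ) / (a + 1)) * ((a + 1) / a) := by
        field_simp
      rw [h1, Real.mul_rpow (by positivity) (by positivity), mul_comm]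
      rw [neg_div, Real.rpow_neg (by positivity), ← Real.inv_rpow (by positivity),
        inv_div]
    -- the two auxiliary sequences
    set f : ℕ → ENNReal := fun n =>
      volume (symmDiff ((((n : ℝ) / |(h : ℝ)|) ^ (-(1 : ℝ) / d)) • VRR h n) B) with hf_def
    set g : ℕ → ENNReal := fun n =>
      volume (symmDiff ((((n : ℝ) / |((h - 1 : ℤ) : ℝ)|) ^ (-(1 : ℝ) / d)) • VRR (h - 1) n) B)
      with hg_def
    have hcast1 : ((h - 1 : ℤ) : ℝ) = (h : ℝ) - 1 := by push_cast; ring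
    -- volume of B \ c • B
    have hcB : c • B = Metric.ball (0 : EuclideanSpace ℝ (Fin d)) (c * ρ) := by
      rw [hB, smul_ball hc0.ne' 0 ρ, smul_zero]
      simp [abs_of_pos hc0]
    have hcBsub : c • B ⊆ B := by
      rw [hcB, hB]
      exact Metric.ball_subset_ball (by nlinarith)
    have hcBvol : volume (c • B) = ENNReal.ofReal (a / (a + 1)) := by
      rw [Measure.addHaar_smul_of_nonneg volume hc0.le, hvol, mul_one,
        finrank_euclideanSpace_fin, hcd]
    have hdiffvol : volume (B \ c • B) = ENNReal.ofReal (1 - a / (a + 1)) := by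
      rw [measure_diff hcBsub (by rw [hcB]; exact measurableSet_ball.nullMeasurableSet)
        (by rw [hcBvol]; exact ENNReal.ofReal_ne_top), hvol, hcBvol,
        ENNReal.ofReal_sub _ hab0.le, ENNReal.ofReal_one]
    -- pointwise bound
    have hbound : ∀ n : ℕ,
        volume (symmDiff ((((n : ℝ) / |(h : ℝ)|) ^ (-(1 : ℝ) / d)) • VDR h n) B)
          ≤ f n + (ENNReal.ofReal (1 - a / (a + 1)) + g n) := by
      intro n
      set s : ℝ := ((n : ℝ) / |(h : ℝ)|) ^ (-(1 : ℝ) / d) with hs_def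
      set t : ℝ := ((n : ℝ) / |((h : ℝ) - 1)|) ^ (-(1 : ℝ) / d) with ht_def
      have hst : s = c * t := by rw [hs_def, ht_def, ← ha_def]; exact hscal n
      set W : Set (EuclideanSpace ℝ (Fin d)) := t • VRR (h - 1) n with hW_def
      have hA1 : s • VRR (h - 1) n = c • W := by
        rw [hW_def, hst, smul_smul]
      have hsub1 := (hsub h hh n).1
      have hsub2 := (hsub h hh n).2
      have hincl : symmDiff (s • VDR h n) B
          ⊆ (symmDiff (s • VRR h n) B) ∪ ((B \ c • B) ∪ c • (symmDiff W B)) := by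
        intro x hx
        rw [Set.mem_symmDiff] at hx
        rcases hx with ⟨hx1, hx2⟩ | ⟨hx1, hx2⟩
        · exact Or.inl (Set.mem_symmDiff.2 (Or.inl ⟨Set.smul_set_mono hsub2 hx1, hx2⟩))
        · by_cases hxc : x ∈ c • B
          · right; right
            obtain ⟨y, hy, rfl⟩ := hxc
            have hyW : y ∉ W := by
              intro hyW
              apply hx2
              have h1 : c • y ∈ s • VRR (h - 1) n := by
                rw [hA1]; exact Set.smul_mem_smul_set hyW
              exact Set.smul_set_mono hsub1 h1
            exact Set.smul_mem_smul_set (Set.mem_symmDiff.2 (Or.inr ⟨hy, hyW⟩))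
          · exact Or.inr (Or.inl ⟨hx1, hxc⟩)
      calc volume (symmDiff (s • VDR h n) B)
          ≤ volume ((symmDiff (s • VRR h n) B) ∪ ((B \ c • B) ∪ c • (symmDiff W B))) :=
            measure_mono hincl
        _ ≤ volume (symmDiff (s • VRR h n) B)
            + (volume (B \ c • B) + volume (c • (symmDiff W B))) :=
            le_trans (measure_union_le _ _) (by gcongr; exact measure_union_le _ _)
        _ ≤ f n + (ENNReal.ofReal (1 - a / (a + 1)) + g n) := by
            refine add_le_add le_rfl (add_le_add (le_of_eq hdiffvol) ?_)
            rw [Measure.addHaar_smul_of_nonneg volume hc0.le, finrank_euclideanSpace_fin, hcd]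
            calc ENNReal.ofReal (a / (a + 1)) * volume (symmDiff W B)
                ≤ 1 * volume (symmDiff W B) := by
                  gcongr; exact ENNReal.ofReal_le_one.2 hab1.le
              _ = g n := by
                rw [one_mul, hg_def, hW_def, ht_def, hcast1]
      -- end bound
    have hg0 : Tendsto g atTop (nhds 0) := hconv (h - 1) (by omega)
    have hf0 : Tendsto f atTop (nhds 0) := hconv h hh
    have hu : Tendsto (fun n => f n + (ENNReal.ofReal (1 - a / (a + 1)) + g n)) atTop
        (nhds (0 + (ENNReal.ofReal (1 - a / (a + 1)) + 0))) :=
      hf0.add (tendsto_const_nhds.add hg0)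
    calc limsup (fun n : ℕ =>
          volume (symmDiff ((((n : ℝ) / |(h : ℝ)|) ^ (-(1 : ℝ) / d)) • VDR h n) B)) atTop
        ≤ limsup (fun n => f n + (ENNReal.ofReal (1 - a / (a + 1)) + g n)) atTop :=
          limsup_le_limsup (Eventually.of_forall hbound)
      _ = 0 + (ENNReal.ofReal (1 - a / (a + 1)) + 0) := hu.limsup_eq
      _ = ENNReal.ofReal (1 - a / (a + 1)) := by simp
  refine ⟨key, ?_⟩
  have habs_tendsto : Tendsto (fun h : ℤ => |(h : ℝ)|) atBot atTop :=
    tendsto_abs_atBot_atTop.comp (tendsto_intCast_atBot_iff.2 tendsto_id)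
  have hub : Tendsto (fun h : ℤ => ENNReal.ofReal (1 - |(h : ℝ)| / (|(h : ℝ)| + 1)))
      atBot (nhds 0) := by
    rw [← ENNReal.ofReal_zero]
    apply ENNReal.tendsto_ofReal
    have h1 : Tendsto (fun h : ℤ => (|(h : ℝ)| + 1)⁻¹) atBot (nhds 0) :=
      tendsto_inv_atTop_zero.comp (tendsto_atTop_add_const_right _ 1 habs_tendsto)
    have h2 : ∀ᶠ h : ℤ in atBot, (|(h : ℝ)| + 1)⁻¹ = 1 - |(h : ℝ)| / (|(h : ℝ)| + 1) := by
      filter_upwards [eventually_le_atBot (-1 : ℤ)] with h hh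
      have hhr : (h : ℝ) ≤ -1 := by exact_mod_cast hh
      have ha0 : (0 : ℝ) < |(h : ℝ)| + 1 := by positivity
      field_simp
      ring
    exact Tendsto.congr' h2 h1
  refine tendsto_of_tendsto_of_tendsto_of_le_of_le' tendsto_const_nhds hub ?_ ?_
  · exact Eventually.of_forall fun _ => zero_le
  · filter_upwards [eventually_le_atBot (-1 : ℤ)] with h hh
    exact key h hh
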